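/- Characterisation under linear-cycle calibration: let T : [0,1] × [0,∞) → ℝ satisfy (i) non-compensation: T(0,z) = 0 for all z ≥ 0 and T(u,z) > 0 for all u ∈ (0,1] and z ≥ 0; (ii) for each z ≥ 0 the map u ↦ T(u,z) is strictly increasing on [0,1]; (iii) for each u ∈ [0,1] the map z ↦ T(u,z) is antitone (nonincreasing) on [0,∞); and (iv) linear-cycle scale invariance: there is a function F : (0,∞) → (0,∞) with T(u,z₁) = F((1+z₂)/(1+z₁))·T(u,z₂) for all u ∈ (0,1] and z₁, z₂ ≥ 0. Then there exist α ≥ 0 and a strictly increasing function φ : [0,1] → [0,∞) with φ(0) = 0 such that T(u,z) = φ(u)·(1+z)^(−α) for all u ∈ [0,1] and z ≥ 0; that is, up to a monotone transformation φ of the quality scale, the score is the renewal-reward rate u·(1+z)^(−α). -/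

import Mathlib

/-- Characterisation under linear-cycle calibration: if
`T : [0,1] × [0,∞) → ℝ` satisfies (i) non-compensation, (ii) strict
monotonicity in quality, (iii) antitonicity in latency, and (iv) linear-cycle
scale invariance via some `F : (0,∞) → (0,∞)`, then there are `α ≥ 0` and a
strictly increasing `φ : [0,1] → [0,∞)` with `φ(0) = 0` such that
`T(u,z) = φ(u)·(1+z)^(−α)` for all `u ∈ [0,1]`, `z ≥ 0`. -/
theorem linear_cycle_characterisation
    (T : ℝ → ℝ → ℝ)
    (hzero : ∀ z : ℝ, 0 ≤ z → T 0 z = 0)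
    (hTpos : ∀ u ∈ Set.Ioc (0 : ℝ) 1, ∀ z : ℝ, 0 ≤ z → 0 < T u z)
    (hmono : ∀ z : ℝ, 0 ≤ z → StrictMonoOn (fun u => T u z) (Set.Icc (0 : ℝ) 1))
    (hanti : ∀ u ∈ Set.Icc (0 : ℝ) 1, ∀ z₁ z₂ : ℝ, 0 ≤ z₁ → z₁ ≤ z₂ →
      T u z₂ ≤ T u z₁)
    (hscale : ∃ F : ℝ → ℝ, (∀ x : ℝ, 0 < x → 0 < F x) ∧
      ∀ u ∈ Set.Ioc (0 : ℝ) 1, ∀ z₁ z₂ : ℝ, 0 ≤ z₁ → 0 ≤ z₂ →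
        T u z₁ = F ((1 + z₂) / (1 + z₁)) * T u z₂) :
    ∃ α : ℝ, 0 ≤ α ∧ ∃ φ : ℝ → ℝ,
      StrictMonoOn φ (Set.Icc (0 : ℝ) 1) ∧
      (∀ u ∈ Set.Icc (0 : ℝ) 1, 0 ≤ φ u) ∧
      φ 0 = 0 ∧
      ∀ u ∈ Set.Icc (0 : ℝ) 1, ∀ z : ℝ, 0 ≤ z →
        T u z = φ u * (1 + z) ^ (-α) := by
  obtain ⟨F, hFpos, hF⟩ := hscale
  have h1mem : (1:ℝ) ∈ Set.Ioc (0:ℝ) 1 := by constructor <;> norm_num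
  have hc : 0 < T 1 0 := hTpos 1 h1mem 0 le_rfl
  set c := T 1 0 with hcdef
  -- value of F on 1/(1+z)
  have hFval : ∀ z : ℝ, 0 ≤ z → F ((1+z)⁻¹) = T 1 z / c := by
    intro z hz
    have h := hF 1 h1mem z 0 hz le_rfl
    norm_num at h
    rw [h]; field_simp; rfl
  -- factorisation
  have hfact : ∀ u ∈ Set.Ioc (0:ℝ) 1, ∀ z : ℝ, 0 ≤ z →
      T u z = T u 0 * (T 1 z / c) := by
    intro u hu z hz
    have h := hF u hu z 0 hz le_rfl
    norm_num at h
    rw [h, hFval z hz]; ring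
  -- the log-latency function
  set g : ℝ → ℝ := fun t => Real.log (T 1 (Real.exp t - 1)) - Real.log c with hgdef
  have hexp_nonneg : ∀ t : ℝ, 0 ≤ t → (0:ℝ) ≤ Real.exp t - 1 := by
    intro t ht; have := Real.one_le_exp ht; linarith
  have hTpos' : ∀ t : ℝ, 0 ≤ t → 0 < T 1 (Real.exp t - 1) := fun t ht =>
    hTpos 1 h1mem _ (hexp_nonneg t ht)
  have hg0 : g 0 = 0 := by simp [hgdef]; exact sub_self _
  have hadd : ∀ s t : ℝ, 0 ≤ s → 0 ≤ t → g (s + t) = g s + g t := by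
    intro s t hs ht
    have hst : (0:ℝ) ≤ s + t := by linarith
    have hz1 := hexp_nonneg (s+t) hst
    have hz2 := hexp_nonneg t ht
    have hz3 := hexp_nonneg s hs
    have h1 := hF 1 h1mem (Real.exp (s+t) - 1) (Real.exp t - 1) hz1 hz2
    have h2 := hF 1 h1mem (Real.exp s - 1) 0 hz3 le_rfl
    have hr : (1 + (Real.exp t - 1)) / (1 + (Real.exp (s+t) - 1)) = Real.exp (-s) := by
      rw [Real.exp_neg]
      have : (1 + (Real.exp (s+t) - 1)) = Real.exp s * Real.exp t := by
        rw [← Real.exp_add]; ring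
      rw [this]
      have he : Real.exp t ≠ 0 := (Real.exp_pos t).ne'
      field_simp
      ring
    have hr2 : (1 + (0:ℝ)) / (1 + (Real.exp s - 1)) = Real.exp (-s) := by
      rw [Real.exp_neg]; norm_num
    rw [hr] at h1
    rw [hr2] at h2
    have hFe : F (Real.exp (-s)) = T 1 (Real.exp s - 1) / c := by
      rw [h2]; field_simp; rfl
    rw [hFe] at h1
    have p1 := hTpos' (s+t) hst
    have p2 := hTpos' t ht
    have p3 := hTpos' s hs
    have : Real.log (T 1 (Real.exp (s+t) - 1)) =
        Real.log (T 1 (Real.exp s - 1)) + Real.log (T 1 (Real.exp t - 1)) - Real.log c := by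
      rw [h1, div_mul_eq_mul_div, Real.log_div (by positivity) hc.ne',
        Real.log_mul p3.ne' p2.ne']
    simp only [hgdef]
    rw [this]; ring
  have hganti : ∀ s t : ℝ, 0 ≤ s → s ≤ t → g t ≤ g s := by
    intro s t hs hst
    have ht : (0:ℝ) ≤ t := le_trans hs hst
    have hle : Real.exp s - 1 ≤ Real.exp t - 1 := by
      have := Real.exp_le_exp.mpr hst; linarith
    have hT := hanti 1 (by constructor <;> norm_num) (Real.exp s - 1) (Real.exp t - 1)
      (hexp_nonneg s hs) hle
    have := Real.log_le_log (hTpos' t ht) hT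
    simp only [hgdef]; linarith
  have hg1 : g 1 ≤ 0 := by have := hganti 0 1 le_rfl zero_le_one; linarith [hg0]
  refine ⟨-g 1, by linarith, fun u => T u 0, hmono 0 le_rfl, ?_, hzero 0 le_rfl, ?_⟩
  · intro u hu
    rcases eq_or_lt_of_le hu.1 with h | h
    · rw [← h]; exact le_of_eq (hzero 0 le_rfl).symm
    · exact (hTpos u ⟨h, hu.2⟩ 0 le_rfl).le
  -- multiplicativity over ℕ
  have gnat : ∀ n : ℕ, ∀ t : ℝ, 0 ≤ t → g (n * t) = n * g t := by
    intro n
    induction n with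
    | zero => intro t ht; simpa using hg0
    | succ n ih =>
      intro t ht
      have h1 : ((n:ℝ)+1) * t = (n:ℝ) * t + t := by ring
      push_cast
      rw [h1, hadd _ t (by positivity) ht, ih t ht]; ring
  -- value at nonneg rationals
  have grat : ∀ r : ℚ, 0 ≤ r → g r = (r:ℝ) * g 1 := by
    intro r hr
    have hrR : (0:ℝ) ≤ (r:ℝ) := by exact_mod_cast hr
    have hden : (0:ℝ) < r.den := by exact_mod_cast r.pos
    have hnum : 0 ≤ r.num := Rat.num_nonneg.mpr hr
    have key : (r.den : ℝ) * (r:ℝ) = (r.num : ℝ) := by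
      rw [Rat.cast_def]; field_simp
    have h1 : g ((r.den : ℝ) * (r:ℝ)) = (r.den : ℝ) * g r := gnat r.den r hrR
    rw [key] at h1
    have h2 : g ((r.num : ℝ)) = (r.num : ℝ) * g 1 := by
      obtain ⟨m, hm⟩ := Int.eq_ofNat_of_zero_le hnum
      have := gnat m 1 zero_le_one
      rw [mul_one] at this
      rw [hm]; push_cast; exact this
    rw [h2] at h1
    have : g r = ((r.num : ℝ) / (r.den : ℝ)) * g 1 := by
      field_simp at h1 ⊢; linarith
    rw [this, ← Rat.cast_def]
  -- linearity on [0,∞)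
  have glin : ∀ t : ℝ, 0 ≤ t → g t = t * g 1 := by
    intro t ht
    rcases eq_or_lt_of_le ht with h | h
    · rw [← h, hg0]; ring
    have hbound : ∀ ε : ℝ, 0 < ε → |g t - t * g 1| ≤ ε := by
      intro ε hε
      set δ := ε / (-(g 1) + 1) with hδdef
      have hδ : 0 < δ := by apply div_pos hε; linarith
      have hδg : δ * (-(g 1)) ≤ ε := by
        have : δ * (-(g 1) + 1) = ε := by
          rw [hδdef, div_mul_cancel₀ _ (by linarith : (-(g 1)+1) ≠ (0:ℝ))]
        nlinarith
      -- upper bound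
      have hub : g t - t * g 1 ≤ ε := by
        have hlt : max 0 (t - δ) < t := by
          rcases le_total 0 (t - δ) with h' | h'
          · rw [max_eq_right h']; linarith
          · rw [max_eq_left h']; exact h
        obtain ⟨r, hr1, hr2⟩ := exists_rat_btwn hlt
        have hr0 : (0:ℚ) ≤ r := by
          have : (0:ℝ) ≤ max 0 (t - δ) := le_max_left _ _
          exact_mod_cast le_of_lt (lt_of_le_of_lt this hr1)
        have h1 : g t ≤ g r := hganti r t (by exact_mod_cast hr0) hr2.le
        rw [grat r hr0] at h1
        have hr3 : t - δ < (r:ℝ) := lt_of_le_of_lt (le_max_right _ _) hr1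
        nlinarith [hg1]
      -- lower bound
      have hlb : t * g 1 - g t ≤ ε := by
        obtain ⟨r, hr1, hr2⟩ := exists_rat_btwn (show t < t + δ by linarith)
        have hr0 : (0:ℚ) ≤ r := by
          have : (0:ℝ) < (r:ℝ) := lt_trans h hr1
          exact_mod_cast this.le
        have h1 : g r ≤ g t := hganti t r ht hr1.le
        rw [grat r hr0] at h1
        nlinarith [hg1]
      rw [abs_le]; constructor <;> linarith
    by_contra hne
    have habs : 0 < |g t - t * g 1| := abs_pos.mpr (sub_ne_zero.mpr hne)
    have := hbound (|g t - t * g 1| / 2) (by linarith)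
    linarith
  -- T 1 z formula
  have hT1 : ∀ z : ℝ, 0 ≤ z → T 1 z = c * (1+z) ^ (-(-g 1)) := by
    intro z hz
    have h1z : (0:ℝ) < 1 + z := by linarith
    set t := Real.log (1 + z) with htdef
    have ht : 0 ≤ t := Real.log_nonneg (by linarith)
    have hexp : Real.exp t - 1 = z := by rw [htdef, Real.exp_log h1z]; ring
    have hgt : g t = Real.log (T 1 z) - Real.log c := by
      simp only [hgdef]; rw [hexp]
    have hlin := glin t ht
    rw [hgt] at hlin
    have hTz : 0 < T 1 z := hTpos 1 h1mem z hz
    have hlog : Real.log (T 1 z) = Real.log c + t * g 1 := by linarith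
    have heq : T 1 z = Real.exp (Real.log c + t * g 1) := by
      rw [← hlog, Real.exp_log hTz]
    rw [heq, Real.exp_add, Real.exp_log hc, neg_neg,
      Real.rpow_def_of_pos h1z, ← htdef]
  -- conclude
  intro u hu z hz
  show T u z = T u 0 * (1 + z) ^ (-(-g 1))
  rcases eq_or_lt_of_le hu.1 with h | h
  · rw [← h, hzero z hz, hzero 0 le_rfl]; ring
  · rw [hfact u ⟨h, hu.2⟩ z hz, hT1 z hz]
    field_simp
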